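/- Let (X, ρ) be a locally convex topological vector space whose topology is induced by a translation-invariant metric ρ. Then for every fixed nonzero x̄ ∈ X there is an equivalent translation-invariant metric ρ̄ on X satisfying ρ̄(0, t·x̄) = |t| for all real t. -/

import Mathlib

open Filter Topology Set

/-- In a locally convex TVS whose topology is generated by a
translation-invariant metric `ρ`, for every `xb ≠ 0` there is an equivalent
translation-invariant metric `ρ'` with `ρ'(0, t·xb) = |t|` for all `t ∈ ℝ`. -/
theorem stmt5 {X : Type*} [AddCommGroup X] [Module ℝ X] [TopologicalSpace X]
    [IsTopologicalAddGroup X] [ContinuousSMul ℝ X] [LocallyConvexSpace ℝ X]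
    (ρ : X → X → ℝ)
    (hsymm : ∀ x y, ρ x y = ρ y x)
    (heq : ∀ x y, ρ x y = 0 ↔ x = y)
    (htri : ∀ x y z, ρ x z ≤ ρ x y + ρ y z)
    (hinv : ∀ x y z, ρ (x + z) (y + z) = ρ x y)
    (hgen : ∀ U : Set X, IsOpen U ↔ ∀ x ∈ U, ∃ ε > (0 : ℝ), ∀ y, ρ x y < ε → y ∈ U)
    (xb : X) (hxb : xb ≠ 0) :
    ∃ ρ' : X → X → ℝ,
      (∀ x y, ρ' x y = ρ' y x) ∧
      (∀ x y, ρ' x y = 0 ↔ x = y) ∧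
      (∀ x y z, ρ' x z ≤ ρ' x y + ρ' y z) ∧
      (∀ x y z, ρ' (x + z) (y + z) = ρ' x y) ∧
      (∀ U : Set X, IsOpen U ↔ ∀ x ∈ U, ∃ ε > (0 : ℝ), ∀ y, ρ' x y < ε → y ∈ U) ∧
      (∀ t : ℝ, ρ' 0 (t • xb) = |t|) := by
  -- basic facts about ρ
  have h00 : ρ 0 0 = 0 := (heq 0 0).2 rfl
  have hnn : ∀ x y, 0 ≤ ρ x y := by
    intro x y
    have h0 : ρ x x = 0 := (heq x x).2 rfl
    have := htri x y x
    rw [h0, hsymm y x] at this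
    linarith
  have hshift : ∀ x y, ρ x y = ρ 0 (y - x) := by
    intro x y
    have := hinv x y (-x)
    simpa [sub_eq_add_neg] using this.symm
  have hneg : ∀ v, ρ 0 (-v) = ρ 0 v := by
    intro v
    have h := hinv 0 (-v) v
    simp only [zero_add, neg_add_cancel] at h
    rw [← h, hsymm]
  have hsub : ∀ a b, ρ 0 (a + b) ≤ ρ 0 a + ρ 0 b := by
    intro a b
    have h1 := htri 0 a (a + b)
    have h2 : ρ a (a + b) = ρ 0 b := by
      have := hinv 0 b a
      simpa [add_comm] using this
    linarith
  -- T1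
  haveI : T1Space X := by
    constructor
    intro y
    rw [← isOpen_compl_iff, hgen]
    intro x hx
    refine ⟨ρ x y, ?_, ?_⟩
    · rcases lt_or_eq_of_le (hnn x y) with h | h
      · exact h
      · exact absurd ((heq x y).1 h.symm) hx
    · intro z hz hzy
      subst hzy
      exact lt_irrefl _ hz
  obtain ⟨p, hp⟩ : ∃ p : X →L[ℝ] ℝ, p xb = 1 := SeparatingDual.exists_eq_one hxb
  -- balls of ρ around 0 are open
  have hball : ∀ c : ℝ, IsOpen {v : X | ρ 0 v < c} := by
    intro c
    rw [hgen]
    intro x hx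
    refine ⟨c - ρ 0 x, by simpa using hx, fun y hy => ?_⟩
    have h1 := hsub x (y - x)
    rw [← hshift x y] at h1
    simp only [add_sub_cancel] at h1
    simp only [mem_setOf_eq] at hx ⊢
    linarith
  -- smul smallness
  have hsmul : ∀ c : ℝ, 0 < c → ∃ δ > (0:ℝ), ∀ t : ℝ, |t| < δ → ρ 0 (t • xb) < c := by
    intro c hc
    have hcont : Continuous fun t : ℝ => t • xb := continuous_id.smul continuous_const
    have hopen : IsOpen ((fun t : ℝ => t • xb) ⁻¹' {v : X | ρ 0 v < c}) :=
      (hball c).preimage hcont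
    have h0 : (0:ℝ) ∈ (fun t : ℝ => t • xb) ⁻¹' {v : X | ρ 0 v < c} := by
      simp [h00, hc]
    obtain ⟨δ, hδ, hsub'⟩ := Metric.isOpen_iff.1 hopen 0 h0
    refine ⟨δ, hδ, fun t ht => ?_⟩
    have : t ∈ Metric.ball (0:ℝ) δ := by simpa [Real.dist_eq] using ht
    exact hsub' this
  -- p smallness
  have hpsmall : ∀ c : ℝ, 0 < c → ∃ δ > (0:ℝ), ∀ v : X, ρ 0 v < δ → |p v| < c := by
    intro c hc
    have hopen : IsOpen (p ⁻¹' Metric.ball (0:ℝ) c) :=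
      (Metric.isOpen_ball).preimage p.continuous
    have h0 : (0:X) ∈ p ⁻¹' Metric.ball (0:ℝ) c := by simp [hc]
    obtain ⟨ε, hε, hs⟩ := (hgen _).1 hopen 0 h0
    refine ⟨ε, hε, fun v hv => ?_⟩
    have := hs v hv
    simpa [Real.dist_eq] using this
  -- the new metric
  set D : X → ℝ := fun v => |p v| + ρ 0 (v - p v • xb) with hD
  refine ⟨fun x y => D (y - x), ?_, ?_, ?_, ?_, ?_, ?_⟩
  · -- symmetry
    intro x y
    show D (y - x) = D (x - y)
    have hxy : x - y = -(y - x) := (neg_sub y x).symm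
    rw [hxy]
    simp only [hD, map_neg]
    rw [abs_neg]
    congr 1
    have h2 : -(y - x) - (-(p (y - x))) • xb = -((y - x) - p (y - x) • xb) := by
      rw [neg_smul, sub_neg_eq_add, neg_sub]
      abel
    rw [h2, hneg]
  · -- definiteness
    intro x y
    constructor
    · intro h
      have h' : |p (y - x)| + ρ 0 ((y - x) - p (y - x) • xb) = 0 := h
      have ha : (0:ℝ) ≤ |p (y - x)| := abs_nonneg _
      have hb : (0:ℝ) ≤ ρ 0 ((y - x) - p (y - x) • xb) := hnn _ _
      have h1 : |p (y - x)| = 0 := by linarith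
      have h2 : ρ 0 ((y - x) - p (y - x) • xb) = 0 := by linarith
      have hp0 : p (y - x) = 0 := abs_eq_zero.1 h1
      have h3 := (heq _ _).1 h2
      rw [hp0, zero_smul, sub_zero] at h3
      have h4 : y - x = 0 := h3.symm
      exact (sub_eq_zero.1 h4).symm
    · intro h; subst h
      show D (x - x) = 0
      simp [hD, h00]
  · -- triangle
    intro x y z
    show D (z - x) ≤ D (y - x) + D (z - y)
    have hdec : z - x = (y - x) + (z - y) := by abel
    simp only [hD]
    rw [hdec, map_add]
    have habs : |p (y - x) + p (z - y)| ≤ |p (y - x)| + |p (z - y)| := abs_add_le _ _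
    have hrw : ((y - x) + (z - y)) - (p (y - x) + p (z - y)) • xb
        = ((y - x) - p (y - x) • xb) + ((z - y) - p (z - y) • xb) := by
      rw [add_smul]; abel
    rw [hrw]
    have := hsub ((y - x) - p (y - x) • xb) ((z - y) - p (z - y) • xb)
    linarith
  · -- translation invariance
    intro x y z
    show D ((y + z) - (x + z)) = D (y - x)
    have h : (y + z) - (x + z) = y - x := by abel
    rw [h]
  · -- topology equivalence
    intro U
    rw [hgen]
    constructor
    · -- ρ-open → ρ'-open
      intro hU x hx
      obtain ⟨δ, hδ, hs⟩ := hU x hx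
      obtain ⟨δ₀, hδ₀, hs₀⟩ := hsmul (δ/2) (by linarith)
      refine ⟨min δ₀ (δ/2), lt_min hδ₀ (by linarith), fun y hy => ?_⟩
      replace hy : D (y - x) < min δ₀ (δ/2) := hy
      rw [hD] at hy
      set v := y - x with hv
      have h1 : |p v| < δ₀ := lt_of_le_of_lt (le_add_of_nonneg_right (hnn _ _))
        (lt_of_lt_of_le hy (min_le_left _ _))
      have h2 : ρ 0 (v - p v • xb) < δ/2 := lt_of_le_of_lt
        (le_add_of_nonneg_left (abs_nonneg _)) (lt_of_lt_of_le hy (min_le_right _ _))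
      have h3 : ρ 0 (p v • xb) < δ/2 := hs₀ _ h1
      have h4 : ρ 0 v ≤ ρ 0 (v - p v • xb) + ρ 0 (p v • xb) := by
        have := hsub (v - p v • xb) (p v • xb)
        simpa using this
      apply hs
      rw [hshift x y]
      linarith
    · -- ρ'-open → ρ-open
      intro hU x hx
      obtain ⟨ε, hε, hs⟩ := hU x hx
      obtain ⟨δ₀, hδ₀, hs₀⟩ := hsmul (ε/3) (by linarith)
      obtain ⟨δ₁, hδ₁, hs₁⟩ := hpsmall (min (ε/3) δ₀) (lt_min (by linarith) hδ₀)
      refine ⟨min δ₁ (ε/3), lt_min hδ₁ (by linarith), fun y hy => ?_⟩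
      rw [hshift x y] at hy
      set v := y - x with hv
      have hρv : ρ 0 v < min δ₁ (ε/3) := hy
      have h1 : |p v| < min (ε/3) δ₀ := hs₁ v (lt_of_lt_of_le hρv (min_le_left _ _))
      have h2 : ρ 0 (p v • xb) < ε/3 := hs₀ _ (lt_of_lt_of_le h1 (min_le_right _ _))
      have h3 : ρ 0 (v - p v • xb) ≤ ρ 0 v + ρ 0 (p v • xb) := by
        have := hsub v (-(p v • xb))
        rw [hneg] at this
        simpa [sub_eq_add_neg] using this
      apply hs
      show D (y - x) < ε
      simp only [hD]
      have := lt_of_lt_of_le h1 (min_le_left _ _)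
      have := lt_of_lt_of_le hρv (min_le_right _ _)
      linarith
  · -- normalization
    intro t
    show D (t • xb - 0) = |t|
    simp only [hD, sub_zero, map_smul, hp, smul_eq_mul, mul_one]
    rw [show t • xb - t • xb = (0:X) by abel, h00, add_zero]
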